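/- Let X be a finite rack and G_X its enveloping group. Then the commutator subgroup [G_X, G_X] is finite. -/

import Mathlib

open Rack Subgroup
open scoped commutatorElement

/-- Auxiliary: the quotient map to the enveloping group, with the correct type. -/
def envelMk {X : Type*} [Rack X] (a : Rack.PreEnvelGroup X) : Rack.EnvelGroup X := ⟦a⟧

lemma envelMk_unit {X : Type*} [Rack X] :
    envelMk (Rack.PreEnvelGroup.unit : Rack.PreEnvelGroup X) = 1 := rfl

lemma envelMk_mul {X : Type*} [Rack X] (a b : Rack.PreEnvelGroup X) :
    envelMk (a.mul b) = envelMk a * envelMk b := rfl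

lemma envelMk_inv {X : Type*} [Rack X] (a : Rack.PreEnvelGroup X) :
    envelMk a.inv = (envelMk a)⁻¹ := rfl

lemma envelMk_incl {X : Type*} [Rack X] (x : X) :
    envelMk (Rack.PreEnvelGroup.incl x) = Rack.toEnvelGroup X x := rfl

/-- Conjugation in the enveloping group acts on generators via `envelAction`. -/
lemma envelGroup_conj_incl (X : Type*) [Rack X] (g : Rack.EnvelGroup X) (x : X) :
    g * Rack.toEnvelGroup X x * g⁻¹ = Rack.toEnvelGroup X (Rack.envelAction g x) := by
  induction g using Quotient.inductionOn with
  | h a =>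
    induction a generalizing x with
    | unit =>
      show envelMk _ * _ * (envelMk _)⁻¹ = Rack.toEnvelGroup X (Rack.envelAction (envelMk _) x)
      rw [envelMk_unit]
      simp
    | incl y =>
      show envelMk _ * _ * (envelMk _)⁻¹ = Rack.toEnvelGroup X (Rack.envelAction (envelMk _) x)
      rw [envelMk_incl, Rack.envelAction_prop]
      exact ((Rack.toEnvelGroup X).map_act' (x := y) (y := x)).symm
    | mul a b iha ihb =>
      have iha' : ∀ y : X, envelMk a * Rack.toEnvelGroup X y * (envelMk a)⁻¹
          = Rack.toEnvelGroup X (Rack.envelAction (envelMk a) y) := iha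
      have ihb' : ∀ y : X, envelMk b * Rack.toEnvelGroup X y * (envelMk b)⁻¹
          = Rack.toEnvelGroup X (Rack.envelAction (envelMk b) y) := ihb
      show envelMk _ * _ * (envelMk _)⁻¹ = Rack.toEnvelGroup X (Rack.envelAction (envelMk _) x)
      rw [envelMk_mul, map_mul]
      have key : envelMk a * envelMk b * Rack.toEnvelGroup X x * (envelMk a * envelMk b)⁻¹
          = envelMk a * (envelMk b * Rack.toEnvelGroup X x * (envelMk b)⁻¹) * (envelMk a)⁻¹ := by
        group
      rw [key, ihb', iha']
      rfl
    | inv a iha =>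
      have iha' : ∀ y : X, envelMk a * Rack.toEnvelGroup X y * (envelMk a)⁻¹
          = Rack.toEnvelGroup X (Rack.envelAction (envelMk a) y) := iha
      show envelMk _ * _ * (envelMk _)⁻¹ = Rack.toEnvelGroup X (Rack.envelAction (envelMk _) x)
      rw [envelMk_inv, map_inv]
      have := iha' ((Rack.envelAction (envelMk a))⁻¹ x)
      rw [← Equiv.Perm.mul_apply, mul_inv_cancel, Equiv.Perm.one_apply] at this
      rw [← this]
      group

lemma envelGroup_ker_le_center (X : Type*) [Rack X] :
    (Rack.envelAction (R := X)).ker ≤ Subgroup.center (Rack.EnvelGroup X) := by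
  intro g hg
  rw [Subgroup.mem_center_iff]
  intro h
  have hgen : ∀ x : X, g * Rack.toEnvelGroup X x = Rack.toEnvelGroup X x * g := by
    intro x
    have h1 := envelGroup_conj_incl X g x
    rw [MonoidHom.mem_ker.mp hg] at h1
    simp only [Equiv.Perm.coe_one, id_eq] at h1
    calc g * Rack.toEnvelGroup X x = g * Rack.toEnvelGroup X x * g⁻¹ * g := by group
    _ = Rack.toEnvelGroup X x * g := by rw [h1]
  induction h using Quotient.inductionOn with
  | h a =>
    induction a with
    | unit =>
      show envelMk _ * g = g * envelMk _
      rw [envelMk_unit]; group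
    | incl y =>
      show envelMk _ * g = g * envelMk _
      rw [envelMk_incl, hgen y]
    | mul a b iha ihb =>
      have iha' : envelMk a * g = g * envelMk a := iha
      have ihb' : envelMk b * g = g * envelMk b := ihb
      show envelMk _ * g = g * envelMk _
      rw [envelMk_mul, mul_assoc, ihb', ← mul_assoc, iha', mul_assoc]
    | inv a iha =>
      have iha' : envelMk a * g = g * envelMk a := iha
      show envelMk _ * g = g * envelMk _
      rw [envelMk_inv]
      calc (envelMk a)⁻¹ * g
          = (envelMk a)⁻¹ * (g * envelMk a) * (envelMk a)⁻¹ := by group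
        _ = (envelMk a)⁻¹ * (envelMk a * g) * (envelMk a)⁻¹ := by rw [← iha']
        _ = g * (envelMk a)⁻¹ := by group

lemma commutator_mul_center {G : Type*} [Group G] {g h z w : G}
    (hz : ∀ u : G, u * z = z * u) (hw : ∀ u : G, u * w = w * u) :
    ⁅g * z, h * w⁆ = ⁅g, h⁆ := by
  have hz' : ∀ x : G, z * x * z⁻¹ = x := fun x => by rw [← hz x]; group
  have hw' : ∀ x : G, w * x * w⁻¹ = x := fun x => by rw [← hw x]; group
  simp only [commutatorElement_def, mul_inv_rev]
  calc g * z * (h * w) * (z⁻¹ * g⁻¹) * (w⁻¹ * h⁻¹)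
      = g * (z * (h * w) * z⁻¹) * (g⁻¹ * w⁻¹) * h⁻¹ := by group
    _ = g * (h * w) * (g⁻¹ * w⁻¹) * h⁻¹ := by rw [hz' (h * w)]
    _ = g * h * (w * g⁻¹ * w⁻¹) * h⁻¹ := by group
    _ = g * h * g⁻¹ * h⁻¹ := by rw [hw' g⁻¹]

/-- Let `X` be a finite rack and `G_X` its enveloping group. Then the
commutator subgroup `[G_X, G_X]` is finite. -/
theorem commutator_envelGroup_finite
    (X : Type*) [Rack X] [Finite X] :
    Finite (commutator (Rack.EnvelGroup X)) := by
  set G := Rack.EnvelGroup X with hG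
  -- G / ker is finite
  have hker : Finite (G ⧸ (Rack.envelAction (R := X)).ker) :=
    Finite.of_injective _ (QuotientGroup.kerLift_injective (Rack.envelAction (R := X)))
  -- G / center is finite
  have hcent : Finite (G ⧸ Subgroup.center G) := by
    have hsurj : Function.Surjective
        (QuotientGroup.map (Rack.envelAction (R := X)).ker (Subgroup.center G)
          (MonoidHom.id G) (fun g hg => envelGroup_ker_le_center X hg)) := by
      intro q
      obtain ⟨g, rfl⟩ := QuotientGroup.mk_surjective q
      exact ⟨QuotientGroup.mk g, rfl⟩
    exact Finite.of_surjective _ hsurj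
  -- commutators only depend on cosets mod center
  have hcomm : ∀ g₁ g₂ h₁ h₂ : G,
      (g₁ : G ⧸ Subgroup.center G) = (g₂ : G ⧸ Subgroup.center G) →
      (h₁ : G ⧸ Subgroup.center G) = (h₂ : G ⧸ Subgroup.center G) →
      ⁅g₁, h₁⁆ = ⁅g₂, h₂⁆ := by
    intro g₁ g₂ h₁ h₂ hg hh
    have hg' : g₁⁻¹ * g₂ ∈ Subgroup.center G := (QuotientGroup.eq (s := Subgroup.center G)).mp hg
    have hh' : h₁⁻¹ * h₂ ∈ Subgroup.center G := (QuotientGroup.eq (s := Subgroup.center G)).mp hh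
    rw [Subgroup.mem_center_iff] at hg' hh'
    have hzz : g₂ = g₁ * (g₁⁻¹ * g₂) := by group
    have hww : h₂ = h₁ * (h₁⁻¹ * h₂) := by group
    rw [hzz, hww]
    exact (commutator_mul_center hg' hh').symm
  have hfin : Finite (commutatorSet G) := by
    have hsub : commutatorSet G ⊆ Set.range (fun p : (G ⧸ Subgroup.center G) × (G ⧸ Subgroup.center G) =>
        ⁅Quotient.out p.1, Quotient.out p.2⁆) := by
      rintro c ⟨g, h, rfl⟩
      exact ⟨((g : G ⧸ Subgroup.center G), (h : G ⧸ Subgroup.center G)),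
        hcomm _ _ _ _ (by simp [QuotientGroup.out_eq']) (by simp [QuotientGroup.out_eq'])⟩
    exact Finite.Set.subset _ hsub
  infer_instance
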